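/- In any LZ-End parsing, the copy-height H is bounded by the length of the longest phrase: H ≤ max_{1≤p≤n'} |Z[p]|. Equivalently, defining the copy-depth array C by C[b] = 1 at each phrase end b and C[k] = C[(k−a)+c] + 1 for positions k inside a phrase T[a..b] with source T[c..d] (d being a phrase end), one has C[i] ≤ C[i+1] + 1 for all 1 ≤ i < n, which implies the bound. -/

import Mathlib

namespace LZEndAux

variable {α : Type*}

lemma length_le_foldr_max (Z : List (List α)) (w : List α) (hw : w ∈ Z) :
    w.length ≤ Z.foldr (fun w m => max w.length m) 0 := by
  induction Z with
  | nil => simp at hw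
  | cons a t ih =>
    rcases List.mem_cons.1 hw with h | h
    · subst h; simp
    · exact le_trans (ih h) (le_max_right _ _)

lemma E_succ (Z : List (List α)) (p : ℕ) (hp : p < Z.length) :
    (Z.take (p + 1)).flatten.length
      = (Z.take p).flatten.length + (Z.get ⟨p, hp⟩).length := by
  rw [List.take_succ, List.getElem?_eq_getElem hp, List.flatten_append]
  simp

lemma E_mono (Z : List (List α)) : Monotone (fun q => (Z.take q).flatten.length) := by
  apply monotone_nat_of_le_succ
  intro q
  rw [List.take_succ]
  simp

lemma exists_phrase (Z : List (List α)) (m i : ℕ) (hm : m ≤ Z.length)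
    (hi : i < (Z.take m).flatten.length) :
    ∃ q < m, (Z.take q).flatten.length ≤ i ∧ i < (Z.take (q + 1)).flatten.length := by
  set P : ℕ → Prop := fun q => (Z.take q).flatten.length ≤ i with hP
  refine ⟨Nat.findGreatest P m, ?_, ?_, ?_⟩
  · rcases lt_or_eq_of_le (Nat.findGreatest_le (P := P) m) with h | h
    · exact h
    · exfalso
      have := Nat.findGreatest_spec (P := P) (Nat.zero_le m) (by simp [hP])
      rw [h] at this
      omega
  · exact Nat.findGreatest_spec (P := P) (Nat.zero_le m) (by simp [hP])
  · by_contra h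
    push_neg at h
    rcases le_or_gt (Nat.findGreatest P m + 1) m with hle | hlt
    · exact Nat.findGreatest_is_greatest (lt_add_one _) hle h
    · have h1 : Nat.findGreatest P m = m := by
        have := Nat.findGreatest_le (P := P) m; omega
      have h2 : (Z.take m).flatten.length
          ≤ (Z.take (m + 1)).flatten.length := E_mono Z (by omega)
      rw [h1] at h
      omega

end LZEndAux

open LZEndAux in
/-- In an LZ-End parsing `T = Z[1]⋯Z[n']`, where phrase `p` (0-based)
occupies positions `[E p, E (p+1))` with `E q = |Z[1]⋯Z[q]|`, and its
source ends at the end of phrase `src p ≤ p` (an end-of-phrase position),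
the copy-depth array `C` — defined by `C = 1` at every phrase end and
`C[k] = C[k - a + c] + 1` for interior positions, `c` being the source
start — satisfies `C[i] ≤ C[i+1] + 1`, and `C` is bounded by the length
of the longest phrase. -/
theorem lzEnd_height_le_max_phrase {α : Type*} [DecidableEq α]
    (Z : List (List α)) (hne : ∀ w ∈ Z, w ≠ [])
    (src : Fin Z.length → ℕ)
    (hsrc : ∀ p : Fin Z.length, src p ≤ (p : ℕ))
    (hfit : ∀ p : Fin Z.length,
      (Z.get p).length - 1 ≤ (Z.take (src p)).flatten.length)
    (C : ℕ → ℕ)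
    (hCend : ∀ p : Fin Z.length,
      C ((Z.take ((p : ℕ) + 1)).flatten.length - 1) = 1)
    (hCcopy : ∀ p : Fin Z.length, ∀ k : ℕ,
      (Z.take (p : ℕ)).flatten.length ≤ k →
      k + 1 < (Z.take ((p : ℕ) + 1)).flatten.length →
      C k = C (k - (Z.take (p : ℕ)).flatten.length +
        ((Z.take (src p)).flatten.length - ((Z.get p).length - 1))) + 1) :
    (∀ i : ℕ, i + 1 < Z.flatten.length → C i ≤ C (i + 1) + 1) ∧
    (∀ i : ℕ, i < Z.flatten.length →
      C i ≤ Z.foldr (fun w m => max w.length m) 0) := by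
  have htot : (Z.take Z.length).flatten.length = Z.flatten.length := by
    rw [List.take_length]
  -- key2 : depth bounded by distance to phrase end
  have key2 : ∀ i : ℕ, ∀ p : Fin Z.length,
      (Z.take (p : ℕ)).flatten.length ≤ i →
      i < (Z.take ((p : ℕ) + 1)).flatten.length →
      C i ≤ (Z.take ((p : ℕ) + 1)).flatten.length - i := by
    intro i
    induction i using Nat.strong_induction_on with
    | _ i IH =>
    intro p hpi hip
    by_cases hend : i + 1 = (Z.take ((p : ℕ) + 1)).flatten.length
    · have h1 : C i = 1 := by
        have hi' : i = (Z.take ((p : ℕ) + 1)).flatten.length - 1 := by omega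
        rw [hi']; exact hCend p
      omega
    · have hint : i + 1 < (Z.take ((p : ℕ) + 1)).flatten.length := by omega
      have hEp1 : (Z.take ((p : ℕ) + 1)).flatten.length
          = (Z.take (p : ℕ)).flatten.length + (Z.get p).length :=
        E_succ Z p p.2
      have hfitp := hfit p
      have hsrcle : (Z.take (src p)).flatten.length ≤ (Z.take (p : ℕ)).flatten.length :=
        E_mono Z (hsrc p)
      have hcopy := hCcopy p i hpi hint
      set a := (Z.take (p : ℕ)).flatten.length with ha
      set e := (Z.take (src p)).flatten.length with he
      set L := (Z.get p).length with hLdef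
      set s := i - a + (e - (L - 1)) with hs
      have hL : 2 ≤ L := by omega
      have hsi : s < e := by omega
      have hslt : s < i := by omega
      have hsrcZ : src p ≤ Z.length := le_trans (hsrc p) p.2.le
      obtain ⟨q, hq, hqs, hsq⟩ := exists_phrase Z (src p) s hsrcZ hsi
      have hqZ : q < Z.length := lt_of_lt_of_le hq (le_trans (hsrc p) p.2.le)
      have hIH := IH s hslt ⟨q, hqZ⟩ hqs hsq
      have hq1 : (Z.take (q + 1)).flatten.length ≤ e :=
        E_mono Z (by omega : q + 1 ≤ src p)
      simp only [Fin.val_mk] at hIH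
      omega
  -- key1 : C i ≤ C (i+1) + 1
  have key1 : ∀ i : ℕ, i + 1 < Z.flatten.length → C i ≤ C (i + 1) + 1 := by
    intro i
    induction i using Nat.strong_induction_on with
    | _ i IH =>
    intro hi
    obtain ⟨p', hp', hpi, hip⟩ := exists_phrase Z Z.length i le_rfl (by omega)
    set p : Fin Z.length := ⟨p', hp'⟩ with hpdef
    have hpi : (Z.take (p : ℕ)).flatten.length ≤ i := hpi
    have hip : i < (Z.take ((p : ℕ) + 1)).flatten.length := hip
    by_cases hend : i + 1 = (Z.take ((p : ℕ) + 1)).flatten.length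
    · have h1 : C i = 1 := by
        have hi' : i = (Z.take ((p : ℕ) + 1)).flatten.length - 1 := by omega
        rw [hi']; exact hCend p
      omega
    · have hint : i + 1 < (Z.take ((p : ℕ) + 1)).flatten.length := by omega
      have hEp1 : (Z.take ((p : ℕ) + 1)).flatten.length
          = (Z.take (p : ℕ)).flatten.length + (Z.get p).length :=
        E_succ Z p p.2
      have hfitp := hfit p
      have hsrcle : (Z.take (src p)).flatten.length ≤ (Z.take (p : ℕ)).flatten.length :=
        E_mono Z (hsrc p)
      have hcopy := hCcopy p i hpi hint
      set a := (Z.take (p : ℕ)).flatten.length with ha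
      set e := (Z.take (src p)).flatten.length with he
      set L := (Z.get p).length with hLdef
      set s := i - a + (e - (L - 1)) with hs
      have hL : 2 ≤ L := by omega
      have hsi : s < e := by omega
      have hslt : s < i := by omega
      by_cases hnext : i + 2 < (Z.take ((p : ℕ) + 1)).flatten.length
      · -- i+1 is also interior
        have hcopy2 := hCcopy p (i + 1) (by omega) hnext
        have harith : i + 1 - a + (e - (L - 1)) = s + 1 := by omega
        rw [harith] at hcopy2
        have hIH := IH s hslt (by omega)
        omega
      · -- i+1 is the phrase end
        have hC1 : C (i + 1) = 1 := by
          have hi' : i + 1 = (Z.take ((p : ℕ) + 1)).flatten.length - 1 := by omega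
          rw [hi']; exact hCend p
        -- s is the end of phrase (src p - 1)
        have hsrcpos : 1 ≤ src p := by
          by_contra h
          have h0 : src p = 0 := by omega
          rw [h0] at he
          simp at he
          omega
        have hp1Z : src p - 1 < Z.length := by
          have := le_trans (hsrc p) p.2.le; omega
        have hCs : C s = 1 := by
          have hse : s = (Z.take (src p - 1 + 1)).flatten.length - 1 := by
            have : src p - 1 + 1 = src p := by omega
            rw [this, ← he]
            omega
          rw [hse]
          exact hCend ⟨src p - 1, hp1Z⟩
        omega
  refine ⟨key1, ?_⟩
  intro i hi
  obtain ⟨p', hp', hpi, hip⟩ := exists_phrase Z Z.length i le_rfl (by omega)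
  have h2 := key2 i ⟨p', hp'⟩ hpi hip
  have hEp1 : (Z.take (p' + 1)).flatten.length
      = (Z.take p').flatten.length + (Z.get ⟨p', hp'⟩).length :=
    E_succ Z p' hp'
  have hmax : (Z.get ⟨p', hp'⟩).length ≤ Z.foldr (fun w m => max w.length m) 0 :=
    length_le_foldr_max Z _ (Z.get_mem _)
  simp only [Fin.val_mk] at h2 hip hpi
  omega
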